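/- Let 0 < μ < 1 and define F0 : ℝ⁴ → ℝ⁴ (in the variables φ = (ξ, ξ', η, η')) by F0(φ) = (ξ', 2η' + ∂w0/∂ξ(ξ,η), η', ∂w0/∂η(ξ,η) − 2ξ'). Let A0 be the 4×4 Jacobian matrix of F0 at the point φ0 = ((1−2μ)/2, 0, √3/2, 0). Then the characteristic polynomial of A0 equals λ⁴ + λ² − (27/4)(μ−1)μ. -/

import Mathlib

open Polynomial

/-- The effective potential of the circular restricted three body problem. -/
noncomputable def w0 (μ ξ η : ℝ) : ℝ :=
  (ξ ^ 2 + η ^ 2) / 2 + (1 - μ) / Real.sqrt ((ξ + μ) ^ 2 + η ^ 2)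
    + μ / Real.sqrt ((ξ + μ - 1) ^ 2 + η ^ 2)

/-- Partial derivative of `w0` with respect to the first variable `ξ`. -/
noncomputable def w0ξ (μ ξ η : ℝ) : ℝ := deriv (fun s => w0 μ s η) ξ

/-- Partial derivative of `w0` with respect to the second variable `η`. -/
noncomputable def w0η (μ ξ η : ℝ) : ℝ := deriv (fun s => w0 μ ξ s) η

/-- The first-order vector field of the restricted three body problem in the
synodic frame, in the variables `φ = (ξ, ξ', η, η')`. -/
noncomputable def F0 (μ : ℝ) (φ : Fin 4 → ℝ) : Fin 4 → ℝ :=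
  ![φ 1, 2 * φ 3 + w0ξ μ (φ 0) (φ 2), φ 3, w0η μ (φ 0) (φ 2) - 2 * φ 1]

/-- The equilibrium point corresponding to the Lagrangian point `L4`. -/
noncomputable def φ0 (μ : ℝ) : Fin 4 → ℝ := ![(1 - 2 * μ) / 2, 0, Real.sqrt 3 / 2, 0]

/-- The Jacobian matrix of `F0` at `φ0`: entry `(i, j)` is the partial derivative of
the `i`-th component of `F0` with respect to the `j`-th variable, at `φ0`. -/
noncomputable def A0 (μ : ℝ) : Matrix (Fin 4) (Fin 4) ℝ :=
  Matrix.of fun i j => deriv (fun s => F0 μ (Function.update (φ0 μ) j s) i) (φ0 μ j)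

/- ## Auxiliary lemmas -/

lemma hda_div_sqrt (c : ℝ) {q : ℝ → ℝ} {q' x : ℝ} (hq : HasDerivAt q q' x)
    (hpos : 0 < q x) :
    HasDerivAt (fun s => c / Real.sqrt (q s)) (-(c * q') / (2 * Real.sqrt (q x) ^ 3)) x := by
  have hs : Real.sqrt (q x) ≠ 0 := (Real.sqrt_pos.2 hpos).ne'
  have h1 : HasDerivAt (fun s => Real.sqrt (q s)) (q' / (2 * Real.sqrt (q x))) x :=
    hq.sqrt hpos.ne'
  have h2 : HasDerivAt (fun s => c / Real.sqrt (q s)) _ x := (hasDerivAt_const x c).div h1 hs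
  convert h2 using 1
  have hsq : Real.sqrt (q x) ^ 2 = q x := Real.sq_sqrt hpos.le
  field_simp
  ring

lemma hda_div_sqrt_cube (c : ℝ) {q : ℝ → ℝ} {q' x : ℝ} (hq : HasDerivAt q q' x)
    (hpos : 0 < q x) :
    HasDerivAt (fun s => c / Real.sqrt (q s) ^ 3)
      (-(3 * c * q') / (2 * Real.sqrt (q x) ^ 5)) x := by
  have hs : Real.sqrt (q x) ≠ 0 := (Real.sqrt_pos.2 hpos).ne'
  have h1 : HasDerivAt (fun s => Real.sqrt (q s)) (q' / (2 * Real.sqrt (q x))) x :=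
    hq.sqrt hpos.ne'
  have h3 : HasDerivAt (fun s => Real.sqrt (q s) ^ 3)
      (3 * Real.sqrt (q x) ^ 2 * (q' / (2 * Real.sqrt (q x)))) x := by
    simpa using (show HasDerivAt (fun s => Real.sqrt (q s) ^ 3) _ x from h1.pow 3)
  have h2 : HasDerivAt (fun s => c / Real.sqrt (q s) ^ 3) _ x :=
    (hasDerivAt_const x c).div h3 (pow_ne_zero 3 hs)
  convert h2 using 1
  have hsq : Real.sqrt (q x) ^ 2 = q x := Real.sq_sqrt hpos.le
  field_simp
  ring

/-- Derivative of `s ↦ √(q s)³` (for building quotient rules). -/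
lemma hda_sqrt_cube {q : ℝ → ℝ} {q' x : ℝ} (hq : HasDerivAt q q' x) (hpos : 0 < q x) :
    HasDerivAt (fun s => Real.sqrt (q s) ^ 3)
      (3 * Real.sqrt (q x) ^ 2 * (q' / (2 * Real.sqrt (q x)))) x := by
  simpa using (show HasDerivAt (fun s => Real.sqrt (q s) ^ 3) _ x from (hq.sqrt hpos.ne').pow 3)

lemma hasDerivAt_w0_fst (μ η ξ : ℝ) (hA : 0 < (ξ + μ) ^ 2 + η ^ 2)
    (hB : 0 < (ξ + μ - 1) ^ 2 + η ^ 2) :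
    HasDerivAt (fun s => w0 μ s η)
      (ξ - (1 - μ) * (ξ + μ) / Real.sqrt ((ξ + μ) ^ 2 + η ^ 2) ^ 3
        - μ * (ξ + μ - 1) / Real.sqrt ((ξ + μ - 1) ^ 2 + η ^ 2) ^ 3) ξ := by
  have hqA : HasDerivAt (fun s : ℝ => (s + μ) ^ 2 + η ^ 2) (2 * (ξ + μ)) ξ := by
    simpa using (((hasDerivAt_id ξ).add_const μ).pow 2).add_const (η ^ 2)
  have hqB : HasDerivAt (fun s : ℝ => (s + μ - 1) ^ 2 + η ^ 2) (2 * (ξ + μ - 1)) ξ := by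
    simpa using ((((hasDerivAt_id ξ).add_const μ).sub_const 1).pow 2).add_const (η ^ 2)
  have h1 : HasDerivAt (fun s : ℝ => (s ^ 2 + η ^ 2) / 2) (2 * ξ ^ 1 / 2) ξ := by
    simpa using ((hasDerivAt_pow 2 ξ).add_const (η ^ 2)).div_const 2
  have h2 := hda_div_sqrt (1 - μ) hqA hA
  have h3 := hda_div_sqrt μ hqB hB
  have h : HasDerivAt (fun s => w0 μ s η) _ ξ := (h1.add h2).add h3
  convert h using 1
  ring

lemma w0ξ_eq (μ η ξ : ℝ) (hA : 0 < (ξ + μ) ^ 2 + η ^ 2)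
    (hB : 0 < (ξ + μ - 1) ^ 2 + η ^ 2) :
    w0ξ μ ξ η = ξ - (1 - μ) * (ξ + μ) / Real.sqrt ((ξ + μ) ^ 2 + η ^ 2) ^ 3
        - μ * (ξ + μ - 1) / Real.sqrt ((ξ + μ - 1) ^ 2 + η ^ 2) ^ 3 :=
  (hasDerivAt_w0_fst μ η ξ hA hB).deriv

lemma hasDerivAt_w0_snd (μ ξ η : ℝ) (hA : 0 < (ξ + μ) ^ 2 + η ^ 2)
    (hB : 0 < (ξ + μ - 1) ^ 2 + η ^ 2) :
    HasDerivAt (fun s => w0 μ ξ s)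
      (η - (1 - μ) * η / Real.sqrt ((ξ + μ) ^ 2 + η ^ 2) ^ 3
        - μ * η / Real.sqrt ((ξ + μ - 1) ^ 2 + η ^ 2) ^ 3) η := by
  have hqA : HasDerivAt (fun s : ℝ => (ξ + μ) ^ 2 + s ^ 2) (2 * η) η := by
    simpa using (hasDerivAt_pow 2 η).const_add ((ξ + μ) ^ 2)
  have hqB : HasDerivAt (fun s : ℝ => (ξ + μ - 1) ^ 2 + s ^ 2) (2 * η) η := by
    simpa using (hasDerivAt_pow 2 η).const_add ((ξ + μ - 1) ^ 2)
  have h1 : HasDerivAt (fun s : ℝ => (ξ ^ 2 + s ^ 2) / 2) (2 * η ^ 1 / 2) η := by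
    simpa using ((hasDerivAt_pow 2 η).const_add (ξ ^ 2)).div_const 2
  have h2 := hda_div_sqrt (1 - μ) hqA hA
  have h3 := hda_div_sqrt μ hqB hB
  have h : HasDerivAt (fun s => w0 μ ξ s) _ η := (h1.add h2).add h3
  convert h using 1
  ring

lemma w0η_eq (μ ξ η : ℝ) (hA : 0 < (ξ + μ) ^ 2 + η ^ 2)
    (hB : 0 < (ξ + μ - 1) ^ 2 + η ^ 2) :
    w0η μ ξ η = η - (1 - μ) * η / Real.sqrt ((ξ + μ) ^ 2 + η ^ 2) ^ 3
        - μ * η / Real.sqrt ((ξ + μ - 1) ^ 2 + η ^ 2) ^ 3 :=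
  (hasDerivAt_w0_snd μ ξ η hA hB).deriv

lemma cp4 (a b c : ℝ) :
    (Matrix.of ![![(0:ℝ),1,0,0],![a,0,b,2],![0,0,0,1],![b,-2,c,0]]).charpoly
      = X ^ 4 + C (4 - a - c) * X ^ 2 + C (a * c - b ^ 2) := by
  rw [Matrix.charpoly]
  simp [Matrix.charmatrix_apply, Matrix.det_succ_row_zero, Fin.sum_univ_succ,
    Matrix.diagonal_apply, Fin.succAbove,
    show (Fin.succ 2 : Fin 4) = 3 from rfl, show (Fin.castSucc 2 : Fin 4) = 2 from rfl]
  rw [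
    show (C 4 : ℝ[X]) = C 2 * C 2 by rw [← C_mul]; norm_num]
  ring

/- ## Computation of the Jacobian matrix at `L4` -/

section Entries

variable (μ : ℝ)

local notation "ξ₀" => (1 - 2 * μ) / 2
local notation "η₀" => Real.sqrt 3 / 2

lemma eta_sq : (Real.sqrt 3 / 2 : ℝ) ^ 2 = 3 / 4 := by
  rw [div_pow, Real.sq_sqrt] <;> norm_num

lemma eta_pos : (0:ℝ) < Real.sqrt 3 / 2 := by positivity

/-- Entry (1,0): second derivative of `w0` in `ξ` at `L4` is `3/4`. -/
lemma entry10 : deriv (fun s => w0ξ μ s η₀) ξ₀ = 3 / 4 := by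
  have hfun : (fun s => w0ξ μ s η₀) = fun s =>
      s - (1 - μ) * (s + μ) / Real.sqrt ((s + μ) ^ 2 + η₀ ^ 2) ^ 3
        - μ * (s + μ - 1) / Real.sqrt ((s + μ - 1) ^ 2 + η₀ ^ 2) ^ 3 := by
    funext s
    exact w0ξ_eq μ η₀ s (by nlinarith [sq_nonneg (s + μ), eta_sq])
      (by nlinarith [sq_nonneg (s + μ - 1), eta_sq])
  rw [hfun]
  have hA1 : ((ξ₀ + μ) ^ 2 + η₀ ^ 2 : ℝ) = 1 := by rw [eta_sq]; ring
  have hB1 : ((ξ₀ + μ - 1) ^ 2 + η₀ ^ 2 : ℝ) = 1 := by rw [eta_sq]; ring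
  have hqA : HasDerivAt (fun s : ℝ => (s + μ) ^ 2 + η₀ ^ 2) (2 * (ξ₀ + μ)) ξ₀ := by
    simpa using (((hasDerivAt_id ξ₀).add_const μ).pow 2).add_const (η₀ ^ 2)
  have hqB : HasDerivAt (fun s : ℝ => (s + μ - 1) ^ 2 + η₀ ^ 2) (2 * (ξ₀ + μ - 1)) ξ₀ := by
    simpa using ((((hasDerivAt_id ξ₀).add_const μ).sub_const 1).pow 2).add_const (η₀ ^ 2)
  have hApos : (0:ℝ) < (ξ₀ + μ) ^ 2 + η₀ ^ 2 := by rw [hA1]; norm_num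
  have hBpos : (0:ℝ) < (ξ₀ + μ - 1) ^ 2 + η₀ ^ 2 := by rw [hB1]; norm_num
  have hsA : Real.sqrt ((ξ₀ + μ) ^ 2 + η₀ ^ 2) = 1 := by rw [hA1, Real.sqrt_one]
  have hsB : Real.sqrt ((ξ₀ + μ - 1) ^ 2 + η₀ ^ 2) = 1 := by rw [hB1, Real.sqrt_one]
  have hnumA : HasDerivAt (fun s : ℝ => (1 - μ) * (s + μ)) (1 - μ) ξ₀ := by
    simpa using ((hasDerivAt_id ξ₀).add_const μ).const_mul (1 - μ)
  have hnumB : HasDerivAt (fun s : ℝ => μ * (s + μ - 1)) μ ξ₀ := by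
    simpa using (((hasDerivAt_id ξ₀).add_const μ).sub_const 1).const_mul μ
  have hdenA := hda_sqrt_cube hqA hApos
  have hdenB := hda_sqrt_cube hqB hBpos
  have hneA : Real.sqrt ((ξ₀ + μ) ^ 2 + η₀ ^ 2) ^ 3 ≠ 0 := by rw [hsA]; norm_num
  have hneB : Real.sqrt ((ξ₀ + μ - 1) ^ 2 + η₀ ^ 2) ^ 3 ≠ 0 := by rw [hsB]; norm_num
  have h2 := hnumA.div hdenA hneA
  have h3 := hnumB.div hdenB hneB
  have h := (HasDerivAt.sub (hasDerivAt_id' ((1 - 2 * μ) / 2)) h2).sub h3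
  erw [h.deriv]
  rw [hsA, hsB]
  field_simp
  ring

/-- Entry (1,2): mixed second derivative of `w0` at `L4`. -/
lemma entry12 : deriv (fun s => w0ξ μ ξ₀ s) η₀ = 3 * Real.sqrt 3 / 4 * (1 - 2 * μ) := by
  have hne : (ξ₀ + μ : ℝ) = 1 / 2 := by ring
  have hne' : (ξ₀ + μ - 1 : ℝ) = -(1 / 2) := by ring
  have hfun : (fun s => w0ξ μ ξ₀ s) = fun s =>
      ξ₀ - (1 - μ) * (ξ₀ + μ) / Real.sqrt ((ξ₀ + μ) ^ 2 + s ^ 2) ^ 3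
        - μ * (ξ₀ + μ - 1) / Real.sqrt ((ξ₀ + μ - 1) ^ 2 + s ^ 2) ^ 3 := by
    funext s
    exact w0ξ_eq μ s ξ₀ (by nlinarith [sq_nonneg s]) (by nlinarith [sq_nonneg s])
  rw [hfun]
  have hA1 : ((ξ₀ + μ) ^ 2 + η₀ ^ 2 : ℝ) = 1 := by rw [eta_sq]; ring
  have hB1 : ((ξ₀ + μ - 1) ^ 2 + η₀ ^ 2 : ℝ) = 1 := by rw [eta_sq]; ring
  have hqA : HasDerivAt (fun s : ℝ => (ξ₀ + μ) ^ 2 + s ^ 2) (2 * η₀) η₀ := by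
    simpa using (hasDerivAt_pow 2 η₀).const_add ((ξ₀ + μ) ^ 2)
  have hqB : HasDerivAt (fun s : ℝ => (ξ₀ + μ - 1) ^ 2 + s ^ 2) (2 * η₀) η₀ := by
    simpa using (hasDerivAt_pow 2 η₀).const_add ((ξ₀ + μ - 1) ^ 2)
  have hApos : (0:ℝ) < (ξ₀ + μ) ^ 2 + η₀ ^ 2 := by rw [hA1]; norm_num
  have hBpos : (0:ℝ) < (ξ₀ + μ - 1) ^ 2 + η₀ ^ 2 := by rw [hB1]; norm_num
  have hsA : Real.sqrt ((ξ₀ + μ) ^ 2 + η₀ ^ 2) = 1 := by rw [hA1, Real.sqrt_one]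
  have hsB : Real.sqrt ((ξ₀ + μ - 1) ^ 2 + η₀ ^ 2) = 1 := by rw [hB1, Real.sqrt_one]
  have h2 := hda_div_sqrt_cube ((1 - μ) * (ξ₀ + μ)) hqA hApos
  have h3 := hda_div_sqrt_cube (μ * (ξ₀ + μ - 1)) hqB hBpos
  have h := (((hasDerivAt_const η₀ (ξ₀ : ℝ)).sub h2).sub h3)
  erw [h.deriv]
  rw [hsA, hsB]
  field_simp
  ring

/-- Entry (3,0): mixed second derivative of `w0` at `L4`. -/
lemma entry30 : deriv (fun s => w0η μ s η₀) ξ₀ = 3 * Real.sqrt 3 / 4 * (1 - 2 * μ) := by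
  have hfun : (fun s => w0η μ s η₀) = fun s =>
      η₀ - (1 - μ) * η₀ / Real.sqrt ((s + μ) ^ 2 + η₀ ^ 2) ^ 3
        - μ * η₀ / Real.sqrt ((s + μ - 1) ^ 2 + η₀ ^ 2) ^ 3 := by
    funext s
    exact w0η_eq μ s η₀ (by nlinarith [sq_nonneg (s + μ), eta_sq])
      (by nlinarith [sq_nonneg (s + μ - 1), eta_sq])
  rw [hfun]
  have hA1 : ((ξ₀ + μ) ^ 2 + η₀ ^ 2 : ℝ) = 1 := by rw [eta_sq]; ring
  have hB1 : ((ξ₀ + μ - 1) ^ 2 + η₀ ^ 2 : ℝ) = 1 := by rw [eta_sq]; ring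
  have hqA : HasDerivAt (fun s : ℝ => (s + μ) ^ 2 + η₀ ^ 2) (2 * (ξ₀ + μ)) ξ₀ := by
    simpa using (((hasDerivAt_id ξ₀).add_const μ).pow 2).add_const (η₀ ^ 2)
  have hqB : HasDerivAt (fun s : ℝ => (s + μ - 1) ^ 2 + η₀ ^ 2) (2 * (ξ₀ + μ - 1)) ξ₀ := by
    simpa using ((((hasDerivAt_id ξ₀).add_const μ).sub_const 1).pow 2).add_const (η₀ ^ 2)
  have hApos : (0:ℝ) < (ξ₀ + μ) ^ 2 + η₀ ^ 2 := by rw [hA1]; norm_num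
  have hBpos : (0:ℝ) < (ξ₀ + μ - 1) ^ 2 + η₀ ^ 2 := by rw [hB1]; norm_num
  have hsA : Real.sqrt ((ξ₀ + μ) ^ 2 + η₀ ^ 2) = 1 := by rw [hA1, Real.sqrt_one]
  have hsB : Real.sqrt ((ξ₀ + μ - 1) ^ 2 + η₀ ^ 2) = 1 := by rw [hB1, Real.sqrt_one]
  have h2 := hda_div_sqrt_cube ((1 - μ) * η₀) hqA hApos
  have h3 := hda_div_sqrt_cube (μ * η₀) hqB hBpos
  have h := (((hasDerivAt_const ξ₀ (η₀ : ℝ)).sub h2).sub h3)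
  erw [h.deriv]
  rw [hsA, hsB]
  field_simp
  ring

/-- Entry (3,2): second derivative of `w0` in `η` at `L4` is `9/4`. -/
lemma entry32 : deriv (fun s => w0η μ ξ₀ s) η₀ = 9 / 4 := by
  have hne : (ξ₀ + μ : ℝ) = 1 / 2 := by ring
  have hne' : (ξ₀ + μ - 1 : ℝ) = -(1 / 2) := by ring
  have hfun : (fun s => w0η μ ξ₀ s) = fun s =>
      s - (1 - μ) * s / Real.sqrt ((ξ₀ + μ) ^ 2 + s ^ 2) ^ 3
        - μ * s / Real.sqrt ((ξ₀ + μ - 1) ^ 2 + s ^ 2) ^ 3 := by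
    funext s
    exact w0η_eq μ ξ₀ s (by nlinarith [sq_nonneg s]) (by nlinarith [sq_nonneg s])
  rw [hfun]
  have hA1 : ((ξ₀ + μ) ^ 2 + η₀ ^ 2 : ℝ) = 1 := by rw [eta_sq]; ring
  have hB1 : ((ξ₀ + μ - 1) ^ 2 + η₀ ^ 2 : ℝ) = 1 := by rw [eta_sq]; ring
  have hqA : HasDerivAt (fun s : ℝ => (ξ₀ + μ) ^ 2 + s ^ 2) (2 * η₀) η₀ := by
    simpa using (hasDerivAt_pow 2 η₀).const_add ((ξ₀ + μ) ^ 2)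
  have hqB : HasDerivAt (fun s : ℝ => (ξ₀ + μ - 1) ^ 2 + s ^ 2) (2 * η₀) η₀ := by
    simpa using (hasDerivAt_pow 2 η₀).const_add ((ξ₀ + μ - 1) ^ 2)
  have hApos : (0:ℝ) < (ξ₀ + μ) ^ 2 + η₀ ^ 2 := by rw [hA1]; norm_num
  have hBpos : (0:ℝ) < (ξ₀ + μ - 1) ^ 2 + η₀ ^ 2 := by rw [hB1]; norm_num
  have hsA : Real.sqrt ((ξ₀ + μ) ^ 2 + η₀ ^ 2) = 1 := by rw [hA1, Real.sqrt_one]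
  have hsB : Real.sqrt ((ξ₀ + μ - 1) ^ 2 + η₀ ^ 2) = 1 := by rw [hB1, Real.sqrt_one]
  have hnumA : HasDerivAt (fun s : ℝ => (1 - μ) * s) (1 - μ) η₀ := by
    simpa using (hasDerivAt_id η₀).const_mul (1 - μ)
  have hnumB : HasDerivAt (fun s : ℝ => μ * s) μ η₀ := by
    simpa using (hasDerivAt_id η₀).const_mul μ
  have hdenA := hda_sqrt_cube hqA hApos
  have hdenB := hda_sqrt_cube hqB hBpos
  have hneA : Real.sqrt ((ξ₀ + μ) ^ 2 + η₀ ^ 2) ^ 3 ≠ 0 := by rw [hsA]; norm_num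
  have hneB : Real.sqrt ((ξ₀ + μ - 1) ^ 2 + η₀ ^ 2) ^ 3 ≠ 0 := by rw [hsB]; norm_num
  have h2 := hnumA.div hdenA hneA
  have h3 := hnumB.div hdenB hneB
  have h := (HasDerivAt.sub (hasDerivAt_id' (Real.sqrt 3 / 2)) h2).sub h3
  erw [h.deriv]
  rw [hsA, hsB]
  have h3' : (Real.sqrt 3) ^ 2 = 3 := Real.sq_sqrt (by norm_num)
  field_simp
  nlinarith [h3']

lemma A0_eq : A0 μ = Matrix.of
    ![![0, 1, 0, 0],
      ![3 / 4, 0, 3 * Real.sqrt 3 / 4 * (1 - 2 * μ), 2],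
      ![0, 0, 0, 1],
      ![3 * Real.sqrt 3 / 4 * (1 - 2 * μ), -2, 9 / 4, 0]] := by
  ext i j
  fin_cases i <;> fin_cases j <;>
    simp [A0, F0, φ0, Function.update_apply]
  · exact entry10 μ
  · exact entry12 μ
  · exact entry30 μ
  · exact entry32 μ

end Entries

/-- **Characteristic polynomial at `L4` (Newtonian case).** -/
theorem charpoly_at_L4 (μ : ℝ) (hμ0 : 0 < μ) (hμ1 : μ < 1) :
    (A0 μ).charpoly = X ^ 4 + X ^ 2 - C ((27 / 4) * (μ - 1) * μ) := by
  rw [A0_eq, cp4]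
  have h3 : (Real.sqrt 3) ^ 2 = 3 := Real.sq_sqrt (by norm_num)
  have hc : (3 / 4 * (9 / 4) - (3 * Real.sqrt 3 / 4 * (1 - 2 * μ)) ^ 2 : ℝ)
      = -((27 / 4) * (μ - 1) * μ) := by nlinarith [h3]
  rw [hc, map_neg]
  have : (4 - 3 / 4 - 9 / 4 : ℝ) = 1 := by norm_num
  rw [this, map_one, one_mul]
  ring
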